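/- If ψ ∈ F² is nonzero, φ(w) = a + λw with |λ| = 1, and sup_z |ψ(z)|² e^{|φ(z)|² - |z|²} < ∞, then ψ(w) = ψ(0) e^{-conj(a)λw} for all w, and the function z ↦ |ψ(z)|² e^{|φ(z)|²-|z|²} is a positive constant. -/

import Mathlib

open MeasureTheory Complex

/-- The Gaussian measure `dμ(z) = π⁻¹ e^{-|z|²} dz` on `ℂ`. -/
noncomputable def gaussianMeasure : Measure ℂ :=
  (volume : Measure ℂ).withDensity fun z => ENNReal.ofReal (Real.exp (-‖z‖ ^ 2) / Real.pi)

/-- If `ψ ∈ F²` is nonzero, `φ(w) = a + λw` with `|λ| = 1`, and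
`sup_z |ψ(z)|² e^{|φ(z)|² - |z|²} < ∞`, then `ψ(w) = ψ(0) e^{-conj(a)λw}` and
`z ↦ |ψ(z)|² e^{|φ(z)|² - |z|²}` is a positive constant. -/
theorem multiplier_form_of_unimodular (ψ φ : ℂ → ℂ) (a lam : ℂ)
    (hψ : Differentiable ℂ ψ) (hψ2 : MemLp ψ 2 gaussianMeasure) (hψ0 : ψ ≠ 0)
    (hφ : ∀ w : ℂ, φ w = a + lam * w) (hlam : ‖lam‖ = 1)
    (hM : ∃ C : ℝ, ∀ z : ℂ,
      ‖ψ z‖ ^ 2 * Real.exp (‖φ z‖ ^ 2 - ‖z‖ ^ 2) ≤ C) :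
    (∀ w : ℂ, ψ w = ψ 0 * Complex.exp (-(starRingEnd ℂ) a * lam * w)) ∧
      ∃ c : ℝ, 0 < c ∧ ∀ z : ℂ,
        ‖ψ z‖ ^ 2 * Real.exp (‖φ z‖ ^ 2 - ‖z‖ ^ 2) = c := by
  obtain ⟨C, hC⟩ := hM
  set g : ℂ → ℂ := fun z => ψ z * Complex.exp ((starRingEnd ℂ) a * lam * z) with hg
  have hgdiff : Differentiable ℂ g := hψ.mul ((differentiable_const _ |>.mul differentiable_id).cexp)
  -- key identity on exponents
  have hkey : ∀ z : ℂ, ‖φ z‖ ^ 2 - ‖z‖ ^ 2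
      = ‖a‖ ^ 2 + 2 * ((starRingEnd ℂ) a * lam * z).re := by
    intro z
    have h1 : ‖lam * z‖ ^ 2 = ‖z‖ ^ 2 := by
      rw [norm_mul, mul_pow, hlam, one_pow, one_mul]
    have h2 : (a * (starRingEnd ℂ) (lam * z)).re = ((starRingEnd ℂ) a * lam * z).re := by
      rw [← Complex.conj_re (a * (starRingEnd ℂ) (lam * z))]
      simp [mul_comm, mul_assoc, mul_left_comm]
    rw [hφ, Complex.sq_norm, Complex.normSq_add, ← Complex.sq_norm a, ← Complex.sq_norm (lam*z),
      h1, h2]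
    ring
  -- |g z|² * exp(|a|²) = multiplier
  have habsg : ∀ z : ℂ, ‖g z‖ ^ 2
      = ‖ψ z‖ ^ 2 * Real.exp (2 * ((starRingEnd ℂ) a * lam * z).re) := by
    intro z
    rw [hg]
    simp only [norm_mul, Complex.norm_exp, mul_pow, ← Real.exp_nat_mul]
    ring_nf
  have hmult : ∀ z : ℂ, ‖ψ z‖ ^ 2 * Real.exp (‖φ z‖ ^ 2 - ‖z‖ ^ 2)
      = ‖g z‖ ^ 2 * Real.exp (‖a‖ ^ 2) := by
    intro z
    rw [hkey, habsg, Real.exp_add]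
    ring
  -- g bounded
  have hbd : Bornology.IsBounded (Set.range g) := by
    rw [Metric.isBounded_iff_subset_closedBall 0]
    refine ⟨max 1 (C * Real.exp (-(‖a‖ ^ 2))), ?_⟩
    rintro _ ⟨z, rfl⟩
    have h1 : ‖g z‖ ^ 2 * Real.exp (‖a‖ ^ 2) ≤ C := by
      rw [← hmult]; exact hC z
    have h2 : ‖g z‖ ^ 2 ≤ C * Real.exp (-(‖a‖ ^ 2)) := by
      rw [Real.exp_neg, ← div_eq_mul_inv, le_div_iff₀ (Real.exp_pos _)]
      exact h1
    simp only [Metric.mem_closedBall, dist_zero_right]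
    rcases le_total (‖g z‖) 1 with h | h
    · exact h.trans (le_max_left 1 _)
    · calc ‖g z‖ ≤ ‖g z‖ ^ 2 := by nlinarith
        _ ≤ C * Real.exp (-(‖a‖ ^ 2)) := h2
        _ ≤ max 1 (C * Real.exp (-(‖a‖ ^ 2))) := le_max_right _ _
  have hconst : ∀ z : ℂ, g z = g 0 := fun z =>
    hgdiff.apply_eq_apply_of_bounded hbd z 0
  have hg0 : g 0 = ψ 0 := by simp [hg]
  have hpsi : ∀ w : ℂ, ψ w = ψ 0 * Complex.exp (-(starRingEnd ℂ) a * lam * w) := by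
    intro w
    have := hconst w
    rw [hg0] at this
    have hne : Complex.exp ((starRingEnd ℂ) a * lam * w) ≠ 0 := Complex.exp_ne_zero _
    simp only [hg] at this
    rw [show -(starRingEnd ℂ) a * lam * w = -((starRingEnd ℂ) a * lam * w) by ring,
      Complex.exp_neg]
    field_simp
    linear_combination this
  refine ⟨hpsi, ‖ψ 0‖ ^ 2 * Real.exp (‖a‖ ^ 2), ?_, ?_⟩
  · have hψ0' : ψ 0 ≠ 0 := by
      intro h
      apply hψ0
      funext w
      rw [hpsi w, h, zero_mul]; rfl
    have h0 := norm_pos_iff.mpr hψ0'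
    positivity
  · intro z
    rw [hmult z, hconst z, hg0]
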